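/- arXiv:1007.4268 — 3 statements merged into one kernel-verified Lean document; each statement's English description precedes it below -/
import Mathlib

section
/- Let M = (Q, Γ, δ, q₀) be a rooted pushdown system and let DSG(M) = (S, Γ, E, q₀) where S is the set of control states q such that (q₀, ⟨⟩) ⊢*_M (q, σ⃗) for some stack σ⃗, and E is the set of root-reachable edges. Then DSG(M) is a Dyck state graph, and the root-reachable transition relations of M and DSG(M) coincide. -/
/-- Stack actions over a stack alphabet `Γ`: no change, push, or pop. -/
inductive SAct (Γ : Type) : Type
  | eps : SAct Γ
  | push : Γ → SAct Γ
  | pop : Γ → SAct Γ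
  deriving DecidableEq

/-- Labeled one-step transition on configurations of a pushdown system with
transition relation `δ`. -/
def PStep {Q Γ : Type} (δ : Q → SAct Γ → Q → Prop) :
    Q × List Γ → SAct Γ → Q × List Γ → Prop :=
  fun c g c' =>
    match g with
    | SAct.eps => δ c.1 SAct.eps c'.1 ∧ c'.2 = c.2
    | SAct.push γ => δ c.1 (SAct.push γ) c'.1 ∧ c'.2 = γ :: c.2
    | SAct.pop γ => δ c.1 (SAct.pop γ) c'.1 ∧ c.2 = γ :: c'.2

/-- Multi-step transition labeled by a string of stack actions. -/
inductive Steps {Q Γ : Type} (δ : Q → SAct Γ → Q → Prop) :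
    Q × List Γ → List (SAct Γ) → Q × List Γ → Prop
  | refl (c) : Steps δ c [] c
  | step {c g c' w c''} : PStep δ c g c' → Steps δ c' w c'' → Steps δ c (g :: w) c''

/-- Unlabeled configuration transition: some stack action enables the step. -/
def PAny {Q Γ : Type} (δ : Q → SAct Γ → Q → Prop) (c c' : Q × List Γ) : Prop :=
  ∃ g, PStep δ c g c'

/-- A control state is root-reachable when some configuration path with empty
initial stack reaches it from the root. -/
def Reach {Q Γ : Type} (δ : Q → SAct Γ → Q → Prop) (q₀ q : Q) : Prop :=
  ∃ σ : List Γ, Relation.ReflTransGen (PAny δ) (q₀, ([] : List Γ)) (q, σ)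

/-- The root-reachable (labeled) transition relation on control states. -/
def rootEdge {Q Γ : Type} (δ : Q → SAct Γ → Q → Prop) (q₀ : Q) :
    Q → SAct Γ → Q → Prop := fun q g q' =>
  ∃ σ σ' : List Γ,
    Relation.ReflTransGen (PAny δ) (q₀, ([] : List Γ)) (q, σ) ∧
      PStep δ (q, σ) g (q', σ')


lemma pstep_of_rootEdge_step {Q Γ : Type} {δ : Q → SAct Γ → Q → Prop} {q₀ : Q}
    {b c : Q × List Γ} {g : SAct Γ} (h : PStep (rootEdge δ q₀) b g c) :
    PStep δ b g c := by
  cases g with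
  | eps =>
    obtain ⟨⟨σ, σ', _, hs⟩, hst⟩ := h
    exact ⟨hs.1, hst⟩
  | push γ =>
    obtain ⟨⟨σ, σ', _, hs⟩, hst⟩ := h
    exact ⟨hs.1, hst⟩
  | pop γ =>
    obtain ⟨⟨σ, σ', _, hs⟩, hst⟩ := h
    exact ⟨hs.1, hst⟩

lemma lift_rtg {Q Γ : Type} {δ : Q → SAct Γ → Q → Prop} {q₀ : Q}
    {c : Q × List Γ}
    (h : Relation.ReflTransGen (PAny δ) (q₀, ([] : List Γ)) c) :
    Relation.ReflTransGen (PAny (rootEdge δ q₀)) (q₀, ([] : List Γ)) c := by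
  induction h with
  | refl => exact Relation.ReflTransGen.refl
  | @tail b c h₁ h₂ ih =>
    obtain ⟨g, hg⟩ := h₂
    refine ih.tail ⟨g, ?_⟩
    have hre : rootEdge δ q₀ b.1 g c.1 := ⟨b.2, c.2, by simpa using h₁, by simpa using hg⟩
    cases g with
    | eps => exact ⟨hre, hg.2⟩
    | push γ => exact ⟨hre, hg.2⟩
    | pop γ => exact ⟨hre, hg.2⟩

lemma lower_rtg {Q Γ : Type} {δ : Q → SAct Γ → Q → Prop} {q₀ : Q}
    {c : Q × List Γ}
    (h : Relation.ReflTransGen (PAny (rootEdge δ q₀)) (q₀, ([] : List Γ)) c) :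
    Relation.ReflTransGen (PAny δ) (q₀, ([] : List Γ)) c := by
  induction h with
  | refl => exact Relation.ReflTransGen.refl
  | @tail b c h₁ h₂ ih =>
    obtain ⟨g, hg⟩ := h₂
    exact ih.tail ⟨g, pstep_of_rootEdge_step hg⟩

/-- the Dyck state graph `DSG(M)` of a rooted pushdown system
`M = (Q,Γ,δ,q₀)` — whose states are the root-reachable states and whose edge
(transition) relation is the root-reachable edge relation `rootEdge δ q₀` — is
itself a Dyck state graph (every root-reachable state of `M` is reachable from
the root inside `DSG(M)`), and the root-reachable transition relations of `M`
and `DSG(M)` coincide. -/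
theorem dsg_of_rpds_is_dsg {Q Γ : Type} (δ : Q → SAct Γ → Q → Prop) (q₀ : Q) :
    (∀ q : Q, Reach δ q₀ q → Reach (rootEdge δ q₀) q₀ q) ∧
      rootEdge (rootEdge δ q₀) q₀ = rootEdge δ q₀ := by
  constructor
  · rintro q ⟨σ, hσ⟩
    exact ⟨σ, lift_rtg hσ⟩
  · funext q g q'
    apply propext
    constructor
    · rintro ⟨σ, σ', _, hs⟩
      cases g with
      | eps => exact hs.1
      | push γ => exact hs.1
      | pop γ => exact hs.1
    · rintro ⟨σ, σ', hr, hs⟩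
      refine ⟨σ, σ', lift_rtg hr, ?_⟩
      have hre : rootEdge δ q₀ q g q' := ⟨σ, σ', hr, hs⟩
      cases g with
      | eps => exact ⟨hre, hs.2⟩
      | push γ => exact ⟨hre, hs.2⟩
      | pop γ => exact ⟨hre, hs.2⟩
end

section
/- For a rooted pushdown system M with finite state set, the least fixed point of the iteration function mkDSG(M), starting from the empty node and edge sets, exists and is reached after finitely many iterations; moreover this least fixed point equals DSG(M), the Dyck state graph of root-reachable states and edges of M. -/
/-- One iteration of Dyck state graph construction: add the root, all states
root-reachable in one step from current states, and all root-reachable edges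
out of current states. -/
def mkDSG {Q Γ : Type} (δ : Q → SAct Γ → Q → Prop) (q₀ : Q) :
    Set Q × Set (Q × SAct Γ × Q) → Set Q × Set (Q × SAct Γ × Q) := fun SE =>
  (SE.1 ∪ {q' | ∃ q ∈ SE.1, ∃ g, rootEdge δ q₀ q g q'} ∪ {q₀},
   SE.2 ∪ {t | t.1 ∈ SE.1 ∧ rootEdge δ q₀ t.1 t.2.1 t.2.2})


instance SAct.finite {Γ : Type} [Finite Γ] : Finite (SAct Γ) := by
  apply Finite.of_injective (fun g : SAct Γ => match g with
    | SAct.eps => (Sum.inl () : Unit ⊕ Γ × Bool)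
    | SAct.push γ => Sum.inr (γ, true)
    | SAct.pop γ => Sum.inr (γ, false))
  intro a b h
  cases a <;> cases b <;> simp_all

lemma mkDSG_mono {Q Γ : Type} (δ : Q → SAct Γ → Q → Prop) (q₀ : Q) :
    Monotone (mkDSG δ q₀) := by
  rintro ⟨S, E⟩ ⟨S', E'⟩ ⟨h1, h2⟩
  refine ⟨?_, ?_⟩
  · rintro x ((hx | hx) | hx)
    · exact Or.inl (Or.inl (h1 hx))
    · obtain ⟨q, hq, g, hg⟩ := hx
      exact Or.inl (Or.inr ⟨q, h1 hq, g, hg⟩)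
    · exact Or.inr hx
  · rintro t (ht | ⟨ht1, ht2⟩)
    · exact Or.inl (h2 ht)
    · exact Or.inr ⟨h1 ht1, ht2⟩

lemma rootEdge_reach {Q Γ : Type} {δ : Q → SAct Γ → Q → Prop} {q₀ q q' : Q}
    {g : SAct Γ} (h : rootEdge δ q₀ q g q') : Reach δ q₀ q' := by
  obtain ⟨σ, σ', hr, hs⟩ := h
  exact ⟨σ', hr.tail ⟨g, hs⟩⟩

lemma rootEdge_reach_src {Q Γ : Type} {δ : Q → SAct Γ → Q → Prop} {q₀ q q' : Q}
    {g : SAct Γ} (h : rootEdge δ q₀ q g q') : Reach δ q₀ q := by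
  obtain ⟨σ, σ', hr, _⟩ := h
  exact ⟨σ, hr⟩

lemma mkDSG_le_D {Q Γ : Type} (δ : Q → SAct Γ → Q → Prop) (q₀ : Q)
    (X : Set Q × Set (Q × SAct Γ × Q))
    (hX : X ≤ ({q | Reach δ q₀ q}, {t | rootEdge δ q₀ t.1 t.2.1 t.2.2})) :
    mkDSG δ q₀ X ≤ ({q | Reach δ q₀ q}, {t | rootEdge δ q₀ t.1 t.2.1 t.2.2}) := by
  obtain ⟨h1, h2⟩ := hX
  refine ⟨?_, ?_⟩
  · rintro x ((hx | hx) | hx)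
    · exact h1 hx
    · obtain ⟨q, _, g, hg⟩ := hx
      exact rootEdge_reach hg
    · exact ⟨[], hx ▸ Relation.ReflTransGen.refl⟩
  · rintro t (ht | ⟨_, ht2⟩)
    · exact h2 ht
    · exact ht2

lemma D_le_fixed {Q Γ : Type} (δ : Q → SAct Γ → Q → Prop) (q₀ : Q)
    (X : Set Q × Set (Q × SAct Γ × Q)) (hX : mkDSG δ q₀ X = X) :
    ({q | Reach δ q₀ q}, {t | rootEdge δ q₀ t.1 t.2.1 t.2.2}) ≤ X := by
  have hq₀ : q₀ ∈ X.1 := by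
    rw [← hX]
    exact Or.inr rfl
  have key : ∀ c : Q × List Γ,
      Relation.ReflTransGen (PAny δ) (q₀, ([] : List Γ)) c → c.1 ∈ X.1 := by
    intro c hc
    induction hc with
    | refl => exact hq₀
    | tail hb hstep ih =>
      obtain ⟨g, hs⟩ := hstep
      rw [← hX]
      exact Or.inl (Or.inr ⟨_, ih, g, _, _, hb, hs⟩)
  refine ⟨?_, ?_⟩
  · rintro q ⟨σ, hσ⟩
    exact key (q, σ) hσ
  · rintro ⟨q, g, q'⟩ ht
    have hq : q ∈ X.1 := by
      obtain ⟨σ, hσ⟩ := rootEdge_reach_src ht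
      exact key (q, σ) hσ
    rw [← hX]
    exact Or.inr ⟨hq, ht⟩

/-- for a rooted pushdown system with finite state set (and finite
stack alphabet), iterating `mkDSG(M)` from the empty node and edge sets reaches
a fixed point after finitely many iterations; this fixed point is the least
fixed point of `mkDSG(M)` and equals `DSG(M)`, the pair of the set of
root-reachable states and the set of root-reachable edges of `M`. -/
theorem mkDSG_lfp_eq_DSG {Q Γ : Type} [Fintype Q] [Fintype Γ]
    (δ : Q → SAct Γ → Q → Prop) (q₀ : Q) :
    ∃ n : ℕ,
      (mkDSG δ q₀)^[n] (∅, ∅) = mkDSG δ q₀ ((mkDSG δ q₀)^[n] (∅, ∅)) ∧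
      (∀ X, mkDSG δ q₀ X = X → (mkDSG δ q₀)^[n] (∅, ∅) ≤ X) ∧
      (mkDSG δ q₀)^[n] (∅, ∅) =
        ({q | Reach δ q₀ q}, {t | rootEdge δ q₀ t.1 t.2.1 t.2.2}) := by
  set F := mkDSG δ q₀ with hF
  have hmono := mkDSG_mono δ q₀
  have hchain : ∀ n, F^[n] (∅, ∅) ≤ F^[n + 1] (∅, ∅) := by
    intro n
    induction n with
    | zero => exact ⟨Set.empty_subset _, Set.empty_subset _⟩
    | succ n ih =>
      rw [Function.iterate_succ_apply' F, Function.iterate_succ_apply' F]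
      exact hmono ih
  have hmonochain : Monotone fun n => F^[n] (∅, ∅) :=
    monotone_nat_of_le_succ hchain
  have hle_fixed : ∀ k X, F X = X → F^[k] (∅, ∅) ≤ X := by
    intro k X hXfix
    induction k with
    | zero => exact ⟨Set.empty_subset _, Set.empty_subset _⟩
    | succ k ih =>
      rw [Function.iterate_succ_apply' F, ← hXfix]
      exact hmono ih
  have hle_D : ∀ k, F^[k] (∅, ∅) ≤
      ({q | Reach δ q₀ q}, {t | rootEdge δ q₀ t.1 t.2.1 t.2.2}) := by
    intro k
    induction k with
    | zero => exact ⟨Set.empty_subset _, Set.empty_subset _⟩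
    | succ k ih =>
      rw [Function.iterate_succ_apply' F]
      exact mkDSG_le_D δ q₀ _ ih
  obtain ⟨m, n, hmn, heq⟩ :=
    Finite.exists_ne_map_eq_of_infinite (fun n : ℕ => F^[n] (∅, ∅))
  wlog hlt : m < n generalizing m n
  · exact this n m hmn.symm heq.symm (hmn.lt_or_gt.resolve_left hlt)
  have hsucc : F^[m + 1] (∅, ∅) = F (F^[m] (∅, ∅)) :=
    Function.iterate_succ_apply' F m _
  have hfixpt : F (F^[m] (∅, ∅)) = F^[m] (∅, ∅) := by
    have h1 : F^[m] (∅, ∅) ≤ F^[m + 1] (∅, ∅) := hchain m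
    have h2 : F^[m + 1] (∅, ∅) ≤ F^[m] (∅, ∅) := by
      calc F^[m + 1] (∅, ∅) ≤ F^[n] (∅, ∅) := hmonochain hlt
      _ = F^[m] (∅, ∅) := heq.symm
    rw [hsucc] at h1 h2
    exact le_antisymm h2 h1
  exact ⟨m, hfixpt.symm, fun X hX => hle_fixed m X hX,
    le_antisymm (hle_D m) (D_le_fixed δ q₀ _ hfixpt)⟩
end

section
/- In a pushdown system, composing a no-net-stack-change path from q₀ to q, a push of γ from q to q', a no-net-stack-change path from q' to q'', and a pop of γ from q'' to q₁ yields a no-net-stack-change path from q₀ to q₁. That is, ε-closure edges are closed under the push–ε–pop composition rule. -/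
/-- Balanced (Dyck) strings of stack actions. -/
inductive DyckBalanced {Γ : Type} : List (SAct Γ) → Prop
  | nil : DyckBalanced []
  | eps {w} : DyckBalanced w → DyckBalanced (SAct.eps :: w)
  | wrap {γ w₁ w₂} : DyckBalanced w₁ → DyckBalanced w₂ →
      DyckBalanced (SAct.push γ :: w₁ ++ SAct.pop γ :: w₂)

/-- ε-reachability between control states: for every stack there is a
balanced-action path leaving the stack unchanged. -/
def EpsPath {Q Γ : Type} (δ : Q → SAct Γ → Q → Prop) (q q' : Q) : Prop :=
  ∀ σ : List Γ, ∃ w : List (SAct Γ),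
    DyckBalanced w ∧ Steps δ (q, σ) w (q', σ)



theorem Steps.append {Q Γ : Type} {δ : Q → SAct Γ → Q → Prop}
    {c c' c'' : Q × List Γ} {w w' : List (SAct Γ)}
    (h : Steps δ c w c') (h' : Steps δ c' w' c'') : Steps δ c (w ++ w') c'' := by
  induction h with
  | refl => exact h'
  | step s _ ih => exact Steps.step s (ih h')

theorem DyckBalanced.append {Γ : Type} {w w' : List (SAct Γ)}
    (h : DyckBalanced w) (h' : DyckBalanced w') : DyckBalanced (w ++ w') := by
  induction h with
  | nil => exact h'
  | eps _ ih => exact DyckBalanced.eps ih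
  | wrap h1 _ _ ih2 =>
      simp only [List.cons_append, List.append_assoc]
      exact DyckBalanced.wrap h1 ih2

/-- ε-reachability is closed under the push–ε–pop composition rule:
an ε-path to `q`, a push of `γ` to `q'`, an ε-path to `q''`, and a pop of `γ`
to `q₁` compose to an ε-path from `q₀` to `q₁`. -/
theorem epsPath_push_eps_pop {Q Γ : Type} (δ : Q → SAct Γ → Q → Prop)
    (q₀ q q' q'' q₁ : Q) (γ : Γ)
    (h₀ : EpsPath δ q₀ q)
    (hpush : δ q (SAct.push γ) q')
    (h₁ : EpsPath δ q' q'')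
    (hpop : δ q'' (SAct.pop γ) q₁) :
    EpsPath δ q₀ q₁ := by
  intro σ
  obtain ⟨w₀, hb₀, hs₀⟩ := h₀ σ
  obtain ⟨w₁, hb₁, hs₁⟩ := h₁ (γ :: σ)
  refine ⟨w₀ ++ (SAct.push γ :: w₁ ++ [SAct.pop γ]), ?_, ?_⟩
  · have := DyckBalanced.wrap (γ := γ) (w₂ := []) hb₁ DyckBalanced.nil
    exact hb₀.append this
  · refine hs₀.append ?_
    refine Steps.step (c' := (q', γ :: σ)) ⟨hpush, rfl⟩ ?_
    refine hs₁.append ?_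
    exact Steps.step (c' := (q₁, σ)) ⟨hpop, rfl⟩ (Steps.refl _)
end
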